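/- Let H be a symmetric invertible d×d real matrix, g_0, g ∈ ℝ^d, and let n > 0, λ > 0, μ ∈ [0,1), S > 0, L* > 0, α ≥ 0, ℓ ∈ ℝ be real numbers with c := λ/(1+μ). Set g_1 := g_0 + g/n and v_i := H^{−1} g_i for i ∈ {0,1}, let L_0 ∈ ℝ and L_1 := L_0 + ℓ/n, and define for i ∈ {0,1}: F_i := −(S(1−μ)(1 − cα)/(2λL*))·‖v_i‖² − (S(1−μ)α(2 − cα)/(4λL*))·g_iᵀ H^{−3} g_i + (S(1−μ)/(2(1+μ)L*))·L_i. Define I_1 := (1/n)(1 − cα)·‖H^{−1}g‖², I_2 := 2(1 − cα)·(H^{−1}g_0)ᵀ(H^{−1}g), I_3 := (α/(2n))(2 − cα)·(H^{−1}g)ᵀ H^{−1} (H^{−1}g), and I_4 := α(2 − cα)·(H^{−1}g_0)ᵀ H^{−1} (H^{−1}g). Then F_1 − F_0 = (S(1−μ)/(2nL*)) · ( ℓ/(1+μ) − (1/λ)(I_1 + I_2 + I_3 + I_4) ). -/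

import Mathlib

open Matrix

/-- Core algebraic identity behind the optimal membership-inference score for
SGD: the difference of the non-constant parts of the log-posterior densities of
SGD-trained parameters with and without a target record equals
(S(1−μ)/(2nL*))·(ℓ/(1+μ) − (1/λ)(I₁ + I₂ + I₃ + I₄)). -/
theorem stmt_7 {d : ℕ} (H : Matrix (Fin d) (Fin d) ℝ)
    (hHsymm : H.IsHermitian) (hH : IsUnit H)
    (g0 g : Fin d → ℝ)
    (n lam μ S Lstar α ℓ : ℝ)
    (hn : 0 < n) (hlam : 0 < lam) (hμ0 : 0 ≤ μ) (hμ1 : μ < 1)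
    (hS : 0 < S) (hL : 0 < Lstar) (hα : 0 ≤ α)
    (c : ℝ) (hc : c = lam / (1 + μ))
    (g1 : Fin d → ℝ) (hg1 : g1 = g0 + (1 / n) • g)
    (v0 v1 : Fin d → ℝ) (hv0 : v0 = H⁻¹ *ᵥ g0) (hv1 : v1 = H⁻¹ *ᵥ g1)
    (L0 L1 : ℝ) (hL1 : L1 = L0 + ℓ / n)
    (F0 F1 : ℝ)
    (hF0 : F0 = -(S * (1 - μ) * (1 - c * α) / (2 * lam * Lstar)) * (v0 ⬝ᵥ v0)
      - (S * (1 - μ) * α * (2 - c * α) / (4 * lam * Lstar)) * (g0 ⬝ᵥ (H⁻¹ ^ 3) *ᵥ g0)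
      + (S * (1 - μ) / (2 * (1 + μ) * Lstar)) * L0)
    (hF1 : F1 = -(S * (1 - μ) * (1 - c * α) / (2 * lam * Lstar)) * (v1 ⬝ᵥ v1)
      - (S * (1 - μ) * α * (2 - c * α) / (4 * lam * Lstar)) * (g1 ⬝ᵥ (H⁻¹ ^ 3) *ᵥ g1)
      + (S * (1 - μ) / (2 * (1 + μ) * Lstar)) * L1)
    (I1 I2 I3 I4 : ℝ)
    (hI1 : I1 = (1 / n) * (1 - c * α) * ((H⁻¹ *ᵥ g) ⬝ᵥ (H⁻¹ *ᵥ g)))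
    (hI2 : I2 = 2 * (1 - c * α) * ((H⁻¹ *ᵥ g0) ⬝ᵥ (H⁻¹ *ᵥ g)))
    (hI3 : I3 = (α / (2 * n)) * (2 - c * α) * ((H⁻¹ *ᵥ g) ⬝ᵥ H⁻¹ *ᵥ (H⁻¹ *ᵥ g)))
    (hI4 : I4 = α * (2 - c * α) * ((H⁻¹ *ᵥ g0) ⬝ᵥ H⁻¹ *ᵥ (H⁻¹ *ᵥ g))) :
    F1 - F0 = (S * (1 - μ) / (2 * n * Lstar)) *
      (ℓ / (1 + μ) - (1 / lam) * (I1 + I2 + I3 + I4)) := by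
  have hn' : n ≠ 0 := ne_of_gt hn
  have hlam' : lam ≠ 0 := ne_of_gt hlam
  have hL' : Lstar ≠ 0 := ne_of_gt hL
  have hμ' : (1 : ℝ) + μ ≠ 0 := by positivity
  -- symmetry of H⁻¹
  have hPsymm : (H⁻¹)ᵀ = H⁻¹ := by
    have := hHsymm.inv.eq
    simpa [Matrix.conjTranspose_eq_transpose_of_trivial] using hHsymm.inv.eq
  have hsym : ∀ x y : Fin d → ℝ, x ⬝ᵥ (H⁻¹ *ᵥ y) = (H⁻¹ *ᵥ x) ⬝ᵥ y := by
    intro x y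
    rw [Matrix.dotProduct_mulVec, ← Matrix.mulVec_transpose, hPsymm]
  have hpow : ∀ x : Fin d → ℝ, (H⁻¹ ^ 3) *ᵥ x = H⁻¹ *ᵥ (H⁻¹ *ᵥ (H⁻¹ *ᵥ x)) := by
    intro x
    rw [Matrix.mulVec_mulVec, Matrix.mulVec_mulVec]
    congr 1
    rw [pow_succ, pow_two]
  set u : Fin d → ℝ := H⁻¹ *ᵥ g with hu
  have hv1' : v1 = v0 + (1 / n) • u := by
    rw [hv1, hg1, Matrix.mulVec_add, Matrix.mulVec_smul, hv0]
  -- quadratic form expansions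
  have hcube : ∀ x y : Fin d → ℝ, x ⬝ᵥ (H⁻¹ ^ 3) *ᵥ y
      = (H⁻¹ *ᵥ x) ⬝ᵥ (H⁻¹ *ᵥ (H⁻¹ *ᵥ y)) := by
    intro x y
    rw [hpow, hsym]
  have e0 : g0 ⬝ᵥ (H⁻¹ ^ 3) *ᵥ g0 = v0 ⬝ᵥ (H⁻¹ *ᵥ v0) := by
    rw [hcube, hv0]
  have e1 : g1 ⬝ᵥ (H⁻¹ ^ 3) *ᵥ g1 = v1 ⬝ᵥ (H⁻¹ *ᵥ v1) := by
    rw [hcube, hv1]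
  have hswap : u ⬝ᵥ (H⁻¹ *ᵥ v0) = v0 ⬝ᵥ (H⁻¹ *ᵥ u) := by
    rw [hsym, dotProduct_comm]
  have e2 : v1 ⬝ᵥ v1 = v0 ⬝ᵥ v0 + (2 / n) * (v0 ⬝ᵥ u) + (1 / n) ^ 2 * (u ⬝ᵥ u) := by
    rw [hv1']
    simp only [dotProduct_add, add_dotProduct, dotProduct_smul,
      smul_dotProduct, smul_eq_mul]
    rw [dotProduct_comm u v0]
    ring
  have e3 : v1 ⬝ᵥ (H⁻¹ *ᵥ v1) = v0 ⬝ᵥ (H⁻¹ *ᵥ v0) + (2 / n) * (v0 ⬝ᵥ (H⁻¹ *ᵥ u))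
      + (1 / n) ^ 2 * (u ⬝ᵥ (H⁻¹ *ᵥ u)) := by
    rw [hv1']
    simp only [Matrix.mulVec_add, Matrix.mulVec_smul, dotProduct_add,
      add_dotProduct, dotProduct_smul, smul_dotProduct, smul_eq_mul]
    rw [hswap]
    ring
  rw [hF1, hF0, hI1, hI2, hI3, hI4, e0, e1, e2, e3, hL1, hv0, hc]
  field_simp
  ring
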